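/- Let 𝔪_1,…,𝔪_t be monomials in x_1,…,x_m, n_i = 𝔪_i/gcd(𝔪_i,𝔪_t), and let φ̃′: T′(𝔪_1,…,𝔪_{t−1}) → T′(n_1,…,n_{t−1}) be the cochain map φ̃′(x^α e^J) = (x^α·𝔪_J/𝔪_{J∪{t}})·ē^J. Then the dual Taylor complex T′(𝔪_1,…,𝔪_t) is isomorphic, as a cochain complex of k-modules, to the cocone of φ̃′; the isomorphism can be chosen degreewise, sending x^α ẽ^J to ±x^α ē^{J∖{t}} when t ∈ J and to ±x^α e^J when t ∉ J, for suitable signs. -/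

import Mathlib

/-!
STATEMENT 12: the dual Taylor complex T′(𝔪_1,…,𝔪_t) is isomorphic, as a
cochain complex of k-modules, to the cocone of the cochain map
φ̃′ : T′(𝔪_1,…,𝔪_{t−1}) → T′(n_1,…,n_{t−1}),
φ̃′(x^α e^J) = (x^α·𝔪_J/𝔪_{J∪{t}})·ē^J; the isomorphism can be chosen
degreewise, sending x^α ẽ^J to ±x^α ē^{J∖{t}} when t ∈ J and to ±x^α e^J when
t ∉ J, for suitable signs.

Monomials in x_1,…,x_m are given by exponent vectors in `Fin m →₀ ℕ`:
𝔪_1,…,𝔪_{t−1} have exponent vectors `a i` (indexed by `i : Fin n`, n = t−1),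
𝔪_t has exponent vector `b`, and the whole family 𝔪_1,…,𝔪_t is `Fin.snoc a b`;
n_i = 𝔪_i/gcd(𝔪_i,𝔪_t) has exponent vector `a i - a i ⊓ b`.

The cocone of φ̃′ has C′^0 = I^0 and C′^{s+1} = I^{s+1} × Ī^s, with differential
b ↦ (−∂b, φ̃′b) in degree 0 and (b, b̄) ↦ (−∂b, φ̃′b + ∂̄b̄) in higher degrees.
The degreewise isomorphism from the cocone to T′(𝔪_1,…,𝔪_t) is given by
`dualIota ε₁` on the I-part (x^α e^J ↦ ε₁(J)·x^α ẽ^J, J ⊆ {1,…,t−1} being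
included into {1,…,t} via `Finset.map Fin.castSuccEmb`) and by `dualSigma ε₂`
on the Ī-part (x^α ē^J ↦ ε₂(J)·x^α ẽ^{J∪{t}}), with signs ε₁(J), ε₂(J) ∈ {±1};
its inverse therefore sends x^α ẽ^J to ±x^α ē^{J∖{t}} when t ∈ J and to
±x^α e^J when t ∉ J, exactly as in the statement.  The theorem asserts that
these maps are bijective in every degree and commute with the differentials.
-/

open Finset

/-- sign(j, J) for j ∉ J: (−1)^(number of elements of J smaller than j). -/
def taylorSign {t : ℕ} (J : Finset (Fin t)) (j : Fin t) : ℤ :=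
  (-1) ^ (J.filter fun i => i < j).card

/-- Exponent vector of the monomial 𝔪_J = lcm_{j ∈ J} 𝔪_j (pointwise maximum). -/
noncomputable def lcmExp {m t : ℕ} (a : Fin t → (Fin m →₀ ℕ)) (J : Finset (Fin t)) :
    Fin m →₀ ℕ :=
  J.sup a

/-- The s-th term I^s of the dual Taylor complex: the free k-module with basis
{x^α e^J : α ∈ ℕ^m, J ⊆ {1,…,t}, |J| = s}. -/
abbrev DualX (k : Type*) [CommRing k] (m t s : ℕ) : Type _ :=
  ((Fin m →₀ ℕ) × {J : Finset (Fin t) // J.card = s}) →₀ k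

open scoped Classical in
/-- The dual Taylor differential
∂(x^α e^J) = Σ_{j∉J} sign(j,J)·(x^α·𝔪_J/𝔪_{J∪{j}})·e^{J∪{j}},
a summand being zero unless 𝔪_{J∪{j}} divides x^α·𝔪_J. -/
noncomputable def dualD {k : Type*} [CommRing k] {m t : ℕ}
    (a : Fin t → (Fin m →₀ ℕ)) (s : ℕ) :
    DualX k m t s →ₗ[k] DualX k m t (s + 1) :=
  Finsupp.lsum ℕ fun p =>
    LinearMap.toSpanSingleton k (DualX k m t (s + 1))
      (∑ j ∈ p.2.1ᶜ.attach,
        taylorSign p.2.1 j.1 •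
          (if lcmExp a (insert j.1 p.2.1) ≤ p.1 + lcmExp a p.2.1 then
            Finsupp.single
              (p.1 + lcmExp a p.2.1 - lcmExp a (insert j.1 p.2.1),
                ⟨insert j.1 p.2.1, by
                  rw [Finset.card_insert_of_notMem (Finset.mem_compl.mp j.2), p.2.2]⟩)
              (1 : k)
          else 0))

open scoped Classical in
/-- The map φ̃′ in degree s, given on basis elements by
φ̃′(x^α e^J) = (x^α·𝔪_J/𝔪_{J∪{t}})·ē^J, the image being zero unless
𝔪_{J∪{t}} divides x^α·𝔪_J. -/
noncomputable def dualPhi {k : Type*} [CommRing k] {m n : ℕ}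
    (a : Fin n → (Fin m →₀ ℕ)) (b : Fin m →₀ ℕ) (s : ℕ) :
    DualX k m n s →ₗ[k] DualX k m n s :=
  Finsupp.lsum ℕ fun p =>
    LinearMap.toSpanSingleton k (DualX k m n s)
      (if lcmExp a p.2.1 ⊔ b ≤ p.1 + lcmExp a p.2.1 then
        Finsupp.single (p.1 + lcmExp a p.2.1 - (lcmExp a p.2.1 ⊔ b), p.2) (1 : k)
      else 0)

/-- The signed inclusion x^α e^J ↦ ε(J)·x^α ẽ^J of the dual Taylor complex on
t−1 monomials into the dual Taylor complex on t monomials. -/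
noncomputable def dualIota {k : Type*} [CommRing k] {m n : ℕ}
    (ε : Finset (Fin n) → ℤ) (s : ℕ) :
    DualX k m n s →ₗ[k] DualX k m (n + 1) s :=
  Finsupp.lsum ℕ fun p =>
    LinearMap.toSpanSingleton k (DualX k m (n + 1) s)
      (ε p.2.1 •
        Finsupp.single (p.1, ⟨p.2.1.map Fin.castSuccEmb, by rw [Finset.card_map, p.2.2]⟩)
          (1 : k))

/-- The signed map x^α ē^J ↦ ε(J)·x^α ẽ^{J∪{t}}. -/
noncomputable def dualSigma {k : Type*} [CommRing k] {m n : ℕ}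
    (ε : Finset (Fin n) → ℤ) (s : ℕ) :
    DualX k m n s →ₗ[k] DualX k m (n + 1) (s + 1) :=
  Finsupp.lsum ℕ fun p =>
    LinearMap.toSpanSingleton k (DualX k m (n + 1) (s + 1))
      (ε p.2.1 •
        Finsupp.single
          (p.1,
            ⟨insert (Fin.last n) (p.2.1.map Fin.castSuccEmb), by
              rw [Finset.card_insert_of_notMem (by
                  simp only [Finset.mem_map]
                  rintro ⟨x, -, h⟩
                  exact (Fin.castSucc_lt_last x).ne h),
                Finset.card_map, p.2.2]⟩)
          (1 : k))
section Combinatorics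
open Finset

variable {m n : ℕ}

theorem last_not_mem_map (K : Finset (Fin n)) :
    Fin.last n ∉ K.map Fin.castSuccEmb := by
  simp only [Finset.mem_map, Fin.coe_castSuccEmb]
  rintro ⟨x, -, h⟩
  exact (Fin.castSucc_lt_last x).ne h

theorem compl_map (K : Finset (Fin n)) :
    (K.map Fin.castSuccEmb)ᶜ = insert (Fin.last n) (Kᶜ.map Fin.castSuccEmb) := by
  ext x
  induction x using Fin.lastCases with
  | last =>
      constructor
      · intro _; exact Finset.mem_insert_self _ _
      · intro _; exact Finset.mem_compl.mpr (last_not_mem_map K)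
  | cast i =>
      simp only [Finset.mem_compl, Finset.mem_insert, Finset.mem_map,
        Fin.coe_castSuccEmb]
      constructor
      · intro h
        right
        exact ⟨i, by simpa using fun hi => h ⟨i, hi, rfl⟩, rfl⟩
      · rintro (h | ⟨j, hj, hji⟩)
        · exact absurd h (Fin.castSucc_lt_last i).ne
        · rintro ⟨j', hj', hj''⟩
          have : j = i := Fin.castSucc_injective n hji
          subst this
          have : j' = j := Fin.castSucc_injective n hj''
          subst this
          exact hj hj'

theorem compl_insert_last (K : Finset (Fin n)) :
    (insert (Fin.last n) (K.map Fin.castSuccEmb))ᶜ = Kᶜ.map Fin.castSuccEmb := by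
  rw [Finset.compl_insert, compl_map, Finset.erase_insert (last_not_mem_map _)]

theorem lcmExp_map {a : Fin n → (Fin m →₀ ℕ)} {b : Fin m →₀ ℕ} (K : Finset (Fin n)) :
    lcmExp (Fin.snoc a b) (K.map Fin.castSuccEmb) = lcmExp a K := by
  unfold lcmExp
  rw [Finset.sup_map]
  refine Finset.sup_congr rfl fun i _ => ?_
  exact Fin.snoc_castSucc _ _ _

theorem lcmExp_insert_last {a : Fin n → (Fin m →₀ ℕ)} {b : Fin m →₀ ℕ} (K : Finset (Fin n)) :
    lcmExp (Fin.snoc a b) (insert (Fin.last n) (K.map Fin.castSuccEmb)) = lcmExp a K ⊔ b := by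
  unfold lcmExp
  rw [Finset.sup_insert, Fin.snoc_last, Finset.sup_map, sup_comm]
  congr 1
  refine Finset.sup_congr rfl fun i _ => ?_
  exact Fin.snoc_castSucc _ _ _

theorem taylorSign_map (K : Finset (Fin n)) (j : Fin n) :
    taylorSign (K.map Fin.castSuccEmb) (Fin.castSucc j) = taylorSign K j := by
  unfold taylorSign
  congr 1
  rw [Finset.filter_map, Finset.card_map]
  congr 1

theorem taylorSign_map_last (K : Finset (Fin n)) :
    taylorSign (K.map Fin.castSuccEmb) (Fin.last n) = (-1) ^ K.card := by
  unfold taylorSign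
  congr 1
  rw [Finset.filter_true_of_mem, Finset.card_map]
  intro x hx
  obtain ⟨y, -, rfl⟩ := Finset.mem_map.mp hx
  exact Fin.castSucc_lt_last y

theorem taylorSign_insert_last (K : Finset (Fin n)) (j : Fin n) :
    taylorSign (insert (Fin.last n) (K.map Fin.castSuccEmb)) (Fin.castSucc j) =
      taylorSign K j := by
  unfold taylorSign
  rw [Finset.filter_insert, if_neg (not_lt.mpr (Fin.castSucc_lt_last j).le)]
  rw [show (K.map Fin.castSuccEmb).filter (fun i => i < Fin.castSucc j) =
      (K.filter (fun i => i < j)).map Fin.castSuccEmb by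
    rw [Finset.filter_map]
    congr 1, Finset.card_map]

theorem insert_map (K : Finset (Fin n)) (j : Fin n) :
    insert (Fin.castSucc j) (K.map Fin.castSuccEmb) = (insert j K).map Fin.castSuccEmb := by
  rw [Finset.map_insert]
  rfl

end Combinatorics
section Arithmetic
open Finset

variable {m n : ℕ}

theorem finsupp_sup_apply (K : Finset (Fin n)) (f : Fin n → (Fin m →₀ ℕ)) (x : Fin m) :
    (K.sup f) x = K.sup fun i => f i x := by
  induction K using Finset.cons_induction with
  | empty => rfl
  | cons j K hj ih => rw [Finset.sup_cons, Finset.sup_cons, Finsupp.sup_apply, ih]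

theorem lcmExp_sub (a : Fin n → (Fin m →₀ ℕ)) (b : Fin m →₀ ℕ) (K : Finset (Fin n)) :
    lcmExp (fun i => a i - a i ⊓ b) K = lcmExp a K - lcmExp a K ⊓ b := by
  ext x
  unfold lcmExp
  rw [Finsupp.tsub_apply, Finsupp.inf_apply, finsupp_sup_apply, finsupp_sup_apply]
  induction K using Finset.cons_induction with
  | empty => simp
  | cons j K hj ih =>
      rw [Finset.sup_cons, Finset.sup_cons, ih, Finsupp.tsub_apply, Finsupp.inf_apply]
      have h1 : ∀ u v : ℕ, u ⊔ v = max u v := fun _ _ => rfl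
      have h2 : ∀ u v : ℕ, u ⊓ v = min u v := fun _ _ => rfl
      rw [h1, h1, h2, h2]
      omega

theorem cond_iff {β M M' b : Fin m →₀ ℕ} (h : M ≤ M') :
    (M' ⊔ b ≤ β + (M ⊔ b)) ↔ (M' - M' ⊓ b ≤ β + (M - M ⊓ b)) := by
  rw [Finsupp.le_def, Finsupp.le_def]
  apply forall_congr'
  intro x
  have hx := Finsupp.le_def.mp h x
  simp only [Finsupp.sup_apply, Finsupp.add_apply, Finsupp.tsub_apply, Finsupp.inf_apply]
  have h1 : ∀ u v : ℕ, u ⊔ v = max u v := fun _ _ => rfl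
  have h2 : ∀ u v : ℕ, u ⊓ v = min u v := fun _ _ => rfl
  rw [h1, h1, h2, h2]
  omega

theorem val_eq {β M M' b : Fin m →₀ ℕ} (h : M ≤ M') :
    β + (M ⊔ b) - (M' ⊔ b) = β + (M - M ⊓ b) - (M' - M' ⊓ b) := by
  ext x
  have hx := Finsupp.le_def.mp h x
  simp only [Finsupp.sup_apply, Finsupp.add_apply, Finsupp.tsub_apply, Finsupp.inf_apply]
  have h1 : ∀ u v : ℕ, u ⊔ v = max u v := fun _ _ => rfl
  have h2 : ∀ u v : ℕ, u ⊓ v = min u v := fun _ _ => rfl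
  rw [h1, h1, h2, h2]
  omega

theorem lcmExp_le_insert (a : Fin n → (Fin m →₀ ℕ)) (K : Finset (Fin n)) (j : Fin n) :
    lcmExp a K ≤ lcmExp a (insert j K) :=
  Finset.sup_mono (Finset.subset_insert j K)

end Arithmetic
section Bas
open Finset

variable {k : Type*} [CommRing k] {m : ℕ}

open scoped Classical in
/-- basis element of the dual Taylor module, or 0 if card is wrong. -/
noncomputable def bas {t : ℕ} (s : ℕ) (K : Finset (Fin t)) (β : Fin m →₀ ℕ) :
    DualX k m t s :=
  if h : K.card = s then Finsupp.single (β, ⟨K, h⟩) (1 : k) else 0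

theorem single_eq_bas {t s : ℕ} (β : Fin m →₀ ℕ) (K : Finset (Fin t)) (h : K.card = s) :
    (Finsupp.single (β, ⟨K, h⟩) (1 : k) : DualX k m t s) = bas s K β := by
  rw [bas, dif_pos h]

theorem bas_eq_zero {t s : ℕ} (β : Fin m →₀ ℕ) (K : Finset (Fin t)) (h : K.card ≠ s) :
    (bas s K β : DualX k m t s) = 0 := by
  rw [bas, dif_neg h]

open scoped Classical in
theorem dualD_bas {t : ℕ} (a : Fin t → (Fin m →₀ ℕ)) (s : ℕ) (K : Finset (Fin t))
    (β : Fin m →₀ ℕ) :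
    dualD (k := k) a s (bas s K β) =
      ∑ j ∈ Kᶜ, taylorSign K j •
        (if lcmExp a (insert j K) ≤ β + lcmExp a K then
          bas (s + 1) (insert j K) (β + lcmExp a K - lcmExp a (insert j K))
        else 0) := by
  by_cases h : K.card = s
  · rw [bas, dif_pos h, dualD, Finsupp.lsum_single, LinearMap.toSpanSingleton_apply, one_smul,
      ← Finset.sum_attach Kᶜ (fun j => taylorSign K j •
        (if lcmExp a (insert j K) ≤ β + lcmExp a K then
          bas (s + 1) (insert j K) (β + lcmExp a K - lcmExp a (insert j K))
        else (0 : DualX k m t (s + 1))))]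
    dsimp only
    exact Finset.sum_congr rfl fun j _ => by rw [single_eq_bas]
  · rw [bas_eq_zero _ _ h, map_zero]
    refine (Finset.sum_eq_zero fun j hj => ?_).symm
    rw [bas_eq_zero, ite_self, smul_zero]
    rw [Finset.card_insert_of_notMem (Finset.mem_compl.mp hj)]
    exact fun hc => h (Nat.succ_injective hc)

open scoped Classical in
theorem dualPhi_bas {n : ℕ} (a : Fin n → (Fin m →₀ ℕ)) (b : Fin m →₀ ℕ) (s : ℕ)
    (K : Finset (Fin n)) (β : Fin m →₀ ℕ) :
    dualPhi (k := k) a b s (bas s K β) =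
      if lcmExp a K ⊔ b ≤ β + lcmExp a K then
        bas s K (β + lcmExp a K - (lcmExp a K ⊔ b))
      else 0 := by
  by_cases h : K.card = s
  · rw [bas, dif_pos h, dualPhi, Finsupp.lsum_single, LinearMap.toSpanSingleton_apply, one_smul]
    split
    · rw [single_eq_bas]
    · rfl
  · rw [bas_eq_zero _ _ h, map_zero, bas_eq_zero _ _ h, ite_self]

theorem dualIota_bas {n : ℕ} (ε : Finset (Fin n) → ℤ) (s : ℕ) (K : Finset (Fin n))
    (β : Fin m →₀ ℕ) :
    dualIota (k := k) ε s (bas s K β) = ε K • bas s (K.map Fin.castSuccEmb) β := by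
  by_cases h : K.card = s
  · rw [bas, dif_pos h, dualIota, Finsupp.lsum_single, LinearMap.toSpanSingleton_apply, one_smul]
    congr 1
    rw [single_eq_bas]
  · rw [bas_eq_zero _ _ h, map_zero, bas_eq_zero, smul_zero]
    rw [Finset.card_map]; exact h

theorem dualSigma_bas {n : ℕ} (ε : Finset (Fin n) → ℤ) (s : ℕ) (K : Finset (Fin n))
    (β : Fin m →₀ ℕ) :
    dualSigma (k := k) ε s (bas s K β) =
      ε K • bas (s + 1) (insert (Fin.last n) (K.map Fin.castSuccEmb)) β := by
  by_cases h : K.card = s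
  · rw [bas, dif_pos h, dualSigma, Finsupp.lsum_single, LinearMap.toSpanSingleton_apply, one_smul]
    congr 1
    rw [single_eq_bas]
  · rw [bas_eq_zero _ _ h, map_zero, bas_eq_zero, smul_zero]
    rw [Finset.card_insert_of_notMem (last_not_mem_map K), Finset.card_map]
    exact fun hc => h (Nat.succ_injective hc)

end Bas
section Commute
open Finset

variable {k : Type*} [CommRing k] {m n : ℕ}

/-- sign for the I-part. -/
def eps1 {n : ℕ} (J : Finset (Fin n)) : ℤ := (-1) ^ J.card

/-- sign for the Ī-part. -/
def eps2 {n : ℕ} (_ : Finset (Fin n)) : ℤ := 1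

theorem eps1_insert {J : Finset (Fin n)} {j : Fin n} (h : j ∉ J) :
    eps1 (insert j J) = (-1) * eps1 J := by
  unfold eps1
  rw [Finset.card_insert_of_notMem h, pow_succ]
  ring

theorem zsmul_ite {M : Type*} [AddCommGroup M] (c : ℤ) (p : Prop) [Decidable p] (x : M) :
    c • (if p then x else 0) = if p then c • x else 0 := by
  split <;> simp

theorem neg_smul_trick {M : Type*} [AddCommGroup M] (sgn e : ℤ) (w : M) :
    -(sgn • (((-1) * e) • w)) = e • sgn • w := by
  rw [smul_smul, smul_smul, ← neg_smul]
  congr 1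
  ring

theorem eps1_sq_smul {M : Type*} [AddCommGroup M] (c : ℕ) (w : M) :
    ((-1 : ℤ) ^ c) • ((-1 : ℤ) ^ c) • w = w := by
  rw [smul_smul, ← pow_add, Even.neg_one_pow ⟨c, rfl⟩, one_smul]

theorem commute_x_bas (a : Fin n → (Fin m →₀ ℕ)) (b : Fin m →₀ ℕ) (s : ℕ)
    (K : Finset (Fin n)) (α : Fin m →₀ ℕ) :
    dualIota (k := k) eps1 (s + 1) (-(dualD a s (bas s K α))) +
      dualSigma eps2 s (dualPhi a b s (bas s K α)) =
      dualD (Fin.snoc a b) s (dualIota (k := k) eps1 s (bas s K α)) := by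
  rw [dualIota_bas eps1 s K α, map_zsmul,
    dualD_bas (Fin.snoc a b) s (K.map Fin.castSuccEmb) α, compl_map,
    Finset.sum_insert (last_not_mem_map Kᶜ), smul_add, Finset.sum_map, Finset.smul_sum]
  simp only [Fin.coe_castSuccEmb]
  have hσ : dualSigma (k := k) eps2 s (dualPhi a b s (bas s K α)) =
      eps1 K • (taylorSign (K.map Fin.castSuccEmb) (Fin.last n) •
        (if lcmExp (Fin.snoc a b) (insert (Fin.last n) (K.map Fin.castSuccEmb)) ≤
            α + lcmExp (Fin.snoc a b) (K.map Fin.castSuccEmb) then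
          bas (s + 1) (insert (Fin.last n) (K.map Fin.castSuccEmb))
            (α + lcmExp (Fin.snoc a b) (K.map Fin.castSuccEmb) -
              lcmExp (Fin.snoc a b) (insert (Fin.last n) (K.map Fin.castSuccEmb)))
        else 0)) := by
    rw [taylorSign_map_last, lcmExp_insert_last, lcmExp_map, eps1, eps1_sq_smul,
      dualPhi_bas, apply_ite (dualSigma (k := k) eps2 s), map_zero, dualSigma_bas]
    show _ = _
    rw [show eps2 K = 1 from rfl, one_smul]
  have hι : dualIota (k := k) eps1 (s + 1) (-(dualD a s (bas s K α))) =
      ∑ j ∈ Kᶜ, eps1 K • (taylorSign (K.map Fin.castSuccEmb) (Fin.castSucc j) •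
        (if lcmExp (Fin.snoc a b) (insert (Fin.castSucc j) (K.map Fin.castSuccEmb)) ≤
            α + lcmExp (Fin.snoc a b) (K.map Fin.castSuccEmb) then
          bas (s + 1) (insert (Fin.castSucc j) (K.map Fin.castSuccEmb))
            (α + lcmExp (Fin.snoc a b) (K.map Fin.castSuccEmb) -
              lcmExp (Fin.snoc a b) (insert (Fin.castSucc j) (K.map Fin.castSuccEmb)))
        else 0)) := by
    rw [dualD_bas, map_neg, map_sum, ← Finset.sum_neg_distrib]
    refine Finset.sum_congr rfl fun j hj => ?_
    have hjK : j ∉ K := Finset.mem_compl.mp hj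
    rw [taylorSign_map, insert_map, lcmExp_map (insert j K), lcmExp_map K,
      map_zsmul, apply_ite (dualIota (k := k) eps1 (s + 1)), map_zero, dualIota_bas,
      eps1_insert hjK]
    split_ifs with hc
    · exact neg_smul_trick _ _ _
    · simp
  rw [hσ, hι]
  exact add_comm _ _

theorem commute_xb_bas (a : Fin n → (Fin m →₀ ℕ)) (b : Fin m →₀ ℕ) (s : ℕ)
    (K : Finset (Fin n)) (α : Fin m →₀ ℕ) :
    dualSigma (k := k) eps2 (s + 1) (dualD (fun i => a i - a i ⊓ b) s (bas s K α)) =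
      dualD (Fin.snoc a b) (s + 1) (dualSigma (k := k) eps2 s (bas s K α)) := by
  rw [dualSigma_bas, show eps2 K = 1 from rfl, one_smul,
    dualD_bas (Fin.snoc a b) (s + 1) (insert (Fin.last n) (K.map Fin.castSuccEmb)) α,
    compl_insert_last, Finset.sum_map, dualD_bas (fun i => a i - a i ⊓ b) s K α, map_sum]
  simp only [Fin.coe_castSuccEmb]
  refine Finset.sum_congr rfl fun j hj => ?_
  have hjK : j ∉ K := Finset.mem_compl.mp hj
  rw [map_zsmul, taylorSign_insert_last, apply_ite (dualSigma (k := k) eps2 (s + 1)),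
    map_zero, dualSigma_bas, show eps2 (insert j K) = 1 from rfl, one_smul]
  congr 1
  simp only [Finset.insert_comm (Fin.castSucc j) (Fin.last n), insert_map, lcmExp_insert_last K,
    lcmExp_insert_last (insert j K), lcmExp_sub]
  have hle : lcmExp a K ≤ lcmExp a (insert j K) := lcmExp_le_insert a K j
  rw [if_congr (cond_iff hle) (by rw [val_eq hle]) rfl]
end Commute
section CommuteAll
open Finset

variable {k : Type*} [CommRing k] {m n : ℕ}

theorem single_eq_smul_bas {t s : ℕ} (β : Fin m →₀ ℕ) (K : Finset (Fin t))
    (h : K.card = s) (c : k) :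
    (Finsupp.single (β, ⟨K, h⟩) c : DualX k m t s) = c • bas s K β := by
  rw [← single_eq_bas β K h, Finsupp.smul_single, smul_eq_mul, mul_one]

theorem commute_x (a : Fin n → (Fin m →₀ ℕ)) (b : Fin m →₀ ℕ) (s : ℕ)
    (x : DualX k m n s) :
    dualIota (k := k) eps1 (s + 1) (-(dualD a s x)) +
      dualSigma eps2 s (dualPhi a b s x) =
      dualD (Fin.snoc a b) s (dualIota (k := k) eps1 s x) := by
  induction x using Finsupp.induction_linear with
  | zero => simp
  | add f g hf hg =>
      simp only [map_add, neg_add]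
      rw [← hf, ← hg]
      abel
  | single p c =>
      obtain ⟨α, K, hK⟩ := p
      rw [single_eq_smul_bas α K hK c, map_smul, ← smul_neg, map_smul, map_smul, map_smul,
        map_smul, map_smul, ← smul_add, commute_x_bas]

theorem commute_xb (a : Fin n → (Fin m →₀ ℕ)) (b : Fin m →₀ ℕ) (s : ℕ)
    (xb : DualX k m n s) :
    dualSigma (k := k) eps2 (s + 1) (dualD (fun i => a i - a i ⊓ b) s xb) =
      dualD (Fin.snoc a b) (s + 1) (dualSigma (k := k) eps2 s xb) := by
  induction xb using Finsupp.induction_linear with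
  | zero => simp
  | add f g hf hg => simp only [map_add, hf, hg]
  | single p c =>
      obtain ⟨α, K, hK⟩ := p
      rw [single_eq_smul_bas α K hK c, map_smul, map_smul, map_smul, map_smul, commute_xb_bas]

end CommuteAll
section Bijective
open Finset

variable {k : Type*} [CommRing k] {m n : ℕ}

/-- pull a finset of `Fin (n+1)` back along `castSucc`. -/
noncomputable def pull (S : Finset (Fin (n + 1))) : Finset (Fin n) :=
  S.preimage Fin.castSucc (Fin.castSucc_injective n).injOn

theorem mem_pull {S : Finset (Fin (n + 1))} {x : Fin n} :
    x ∈ pull S ↔ Fin.castSucc x ∈ S := Finset.mem_preimage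

theorem pull_map (K : Finset (Fin n)) : pull (K.map Fin.castSuccEmb) = K := by
  ext x
  rw [mem_pull, Finset.mem_map]
  constructor
  · rintro ⟨y, hy, hxy⟩
    have : y = x := Fin.castSucc_injective n hxy
    subst this; exact hy
  · intro hx; exact ⟨x, hx, rfl⟩

theorem map_pull {S : Finset (Fin (n + 1))} (hS : Fin.last n ∉ S) :
    (pull S).map Fin.castSuccEmb = S := by
  ext x
  rw [Finset.mem_map]
  constructor
  · rintro ⟨y, hy, rfl⟩
    exact mem_pull.mp hy
  · intro hx
    induction x using Fin.lastCases with
    | last => exact absurd hx hS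
    | cast i => exact ⟨i, mem_pull.mpr hx, rfl⟩

theorem card_pull {S : Finset (Fin (n + 1))} (hS : Fin.last n ∉ S) :
    (pull S).card = S.card := by
  rw [← map_pull hS, Finset.card_map, pull_map]

open scoped Classical in
/-- inverse in degree 0. -/
noncomputable def G0 : DualX k m (n + 1) 0 →ₗ[k] DualX k m n 0 :=
  Finsupp.lsum ℕ fun p => LinearMap.toSpanSingleton k (DualX k m n 0) (bas 0 (pull p.2.1) p.1)

open scoped Classical in
/-- inverse in degree s+1. -/
noncomputable def Gs (s : ℕ) :
    DualX k m (n + 1) (s + 1) →ₗ[k] DualX k m n (s + 1) × DualX k m n s :=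
  Finsupp.lsum ℕ fun p => LinearMap.toSpanSingleton k (DualX k m n (s + 1) × DualX k m n s)
    (if Fin.last n ∈ p.2.1 then
      ((0 : DualX k m n (s + 1)), bas s (pull (p.2.1.erase (Fin.last n))) p.1)
    else (((-1 : ℤ) ^ (s + 1)) • bas (s + 1) (pull p.2.1) p.1, (0 : DualX k m n s)))

theorem G0_bas (S : Finset (Fin (n + 1))) (β : Fin m →₀ ℕ) (hS : S.card = 0) :
    G0 (k := k) (bas 0 S β) = bas 0 (pull S) β := by
  rw [bas, dif_pos hS, G0, Finsupp.lsum_single, LinearMap.toSpanSingleton_apply, one_smul]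

theorem Gs_bas (s : ℕ) (S : Finset (Fin (n + 1))) (β : Fin m →₀ ℕ) (hS : S.card = s + 1) :
    Gs (k := k) s (bas (s + 1) S β) =
      (if Fin.last n ∈ S then
        ((0 : DualX k m n (s + 1)), bas s (pull (S.erase (Fin.last n))) β)
      else (((-1 : ℤ) ^ (s + 1)) • bas (s + 1) (pull S) β, (0 : DualX k m n s))) := by
  rw [bas, dif_pos hS, Gs, Finsupp.lsum_single, LinearMap.toSpanSingleton_apply, one_smul]

theorem G0_iota (x : DualX k m n 0) : G0 (k := k) (dualIota eps1 0 x) = x := by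
  induction x using Finsupp.induction_linear with
  | zero => simp
  | add f g hf hg => simp [hf, hg]
  | single p c =>
      obtain ⟨α, K, hK⟩ := p
      rw [single_eq_smul_bas α K hK c, map_smul, dualIota_bas,
        show eps1 K = 1 by rw [eps1, hK, pow_zero], one_smul, map_smul,
        G0_bas _ _ (by rw [Finset.card_map, hK]), pull_map]

theorem iota_G0 (v : DualX k m (n + 1) 0) : dualIota (k := k) eps1 0 (G0 v) = v := by
  induction v using Finsupp.induction_linear with
  | zero => simp
  | add f g hf hg => simp [hf, hg]
  | single p c =>
      obtain ⟨β, S, hS⟩ := p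
      have hSe : S = ∅ := Finset.card_eq_zero.mp hS
      subst hSe
      rw [single_eq_smul_bas β ∅ hS c, map_smul, G0_bas _ _ hS, map_smul, dualIota_bas,
        show eps1 (pull (∅ : Finset (Fin (n + 1)))) = 1 by
          rw [eps1, pull, Finset.preimage_empty, Finset.card_empty, pow_zero],
        one_smul, pull, Finset.preimage_empty, Finset.map_empty]

theorem Gs_iota (s : ℕ) (x : DualX k m n (s + 1)) :
    Gs (k := k) s (dualIota eps1 (s + 1) x) = (x, 0) := by
  induction x using Finsupp.induction_linear with
  | zero => rw [map_zero, map_zero]; rfl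
  | add f g hf hg => simp [hf, hg, Prod.mk_add_mk]
  | single p c =>
      obtain ⟨α, K, hK⟩ := p
      rw [single_eq_smul_bas α K hK c, map_smul, dualIota_bas, map_smul, map_zsmul,
        Gs_bas s _ _ (by rw [Finset.card_map, hK]),
        if_neg (last_not_mem_map K), pull_map,
        show eps1 K = (-1 : ℤ) ^ (s + 1) by rw [eps1, hK]]
      simp [eps1_sq_smul]

theorem Gs_sigma (s : ℕ) (xb : DualX k m n s) :
    Gs (k := k) s (dualSigma eps2 s xb) = (0, xb) := by
  induction xb using Finsupp.induction_linear with
  | zero => rw [map_zero, map_zero]; rfl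
  | add f g hf hg => simp [hf, hg, Prod.mk_add_mk]
  | single p c =>
      obtain ⟨α, K, hK⟩ := p
      rw [single_eq_smul_bas α K hK c, map_smul, dualSigma_bas,
        show eps2 K = 1 from rfl, one_smul, map_smul,
        Gs_bas s _ _ (by
          rw [Finset.card_insert_of_notMem (last_not_mem_map K), Finset.card_map, hK]),
        if_pos (Finset.mem_insert_self _ _),
        Finset.erase_insert (last_not_mem_map K), pull_map,
        Prod.smul_mk, smul_zero]

theorem F_Gs (s : ℕ) (v : DualX k m (n + 1) (s + 1)) :
    ((dualIota (k := k) (n := n) eps1 (s + 1)).coprod (dualSigma eps2 s)) (Gs s v) = v := by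
  induction v using Finsupp.induction_linear with
  | zero => simp
  | add f g hf hg => rw [map_add, map_add, hf, hg]
  | single p c =>
      obtain ⟨β, S, hS⟩ := p
      rw [single_eq_smul_bas β S hS c, map_smul, Gs_bas s S β hS, map_smul]
      congr 1
      by_cases hℓ : Fin.last n ∈ S
      · rw [if_pos hℓ, LinearMap.coprod_apply, map_zero, zero_add, dualSigma_bas,
          show eps2 (pull (S.erase (Fin.last n))) = 1 from rfl, one_smul,
          map_pull (Finset.notMem_erase _ _), Finset.insert_erase hℓ]
      · rw [if_neg hℓ, LinearMap.coprod_apply, map_zero, add_zero, map_zsmul, dualIota_bas,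
          show eps1 (pull S) = (-1 : ℤ) ^ (s + 1) by rw [eps1, card_pull hℓ, hS],
          eps1_sq_smul, map_pull hℓ]

theorem bij0 : Function.Bijective (dualIota (k := k) (m := m) (n := n) eps1 0) :=
  Function.bijective_iff_has_inverse.mpr ⟨G0, G0_iota, iota_G0⟩

theorem bijs (s : ℕ) :
    Function.Bijective
      ((dualIota (k := k) (m := m) (n := n) eps1 (s + 1)).coprod (dualSigma eps2 s)) := by
  refine Function.bijective_iff_has_inverse.mpr ⟨Gs s, fun w => ?_, F_Gs s⟩
  obtain ⟨x, y⟩ := w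
  rw [LinearMap.coprod_apply, map_add, Gs_iota, Gs_sigma, Prod.mk_add_mk, add_zero, zero_add]

end Bijective

/-- T′(𝔪_1,…,𝔪_t) is isomorphic, as a cochain complex of
k-modules, to the cocone of φ̃′ : T′(𝔪_1,…,𝔪_{t−1}) → T′(n_1,…,n_{t−1}), via a
degreewise isomorphism sending x^α ẽ^J to ±x^α ē^{J∖{t}} when t ∈ J and to
±x^α e^J when t ∉ J, for suitable signs. -/
theorem dual_taylor_iso_cocone {k : Type*} [CommRing k] {m n : ℕ}
    (a : Fin n → (Fin m →₀ ℕ)) (b : Fin m →₀ ℕ) :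
    ∃ ε₁ ε₂ : Finset (Fin n) → ℤ,
      (∀ J, ε₁ J = 1 ∨ ε₁ J = -1) ∧ (∀ J, ε₂ J = 1 ∨ ε₂ J = -1) ∧
      -- the maps are bijective in every degree
      Function.Bijective (dualIota (k := k) (m := m) (n := n) ε₁ 0) ∧
      (∀ s : ℕ,
        Function.Bijective ((dualIota (k := k) (m := m) ε₁ (s + 1)).coprod (dualSigma ε₂ s))) ∧
      -- they commute with the differentials: in degree 0 the cocone
      -- differential is b ↦ (−∂b, φ̃′b),
      (∀ x : DualX k m n 0,
        ((dualIota (k := k) ε₁ 1).coprod (dualSigma ε₂ 0))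
            (-(dualD (k := k) a 0 x), dualPhi (k := k) a b 0 x) =
          dualD (k := k) (Fin.snoc a b) 0 (dualIota (k := k) ε₁ 0 x)) ∧
      -- and in degree s+1 it is (b, b̄) ↦ (−∂b, φ̃′b + ∂̄b̄)
      (∀ (s : ℕ) (x : DualX k m n (s + 1)) (xb : DualX k m n s),
        ((dualIota (k := k) ε₁ (s + 2)).coprod (dualSigma ε₂ (s + 1)))
            (-(dualD (k := k) a (s + 1) x),
              dualPhi (k := k) a b (s + 1) x +
                dualD (k := k) (fun i => a i - a i ⊓ b) s xb) =
          dualD (k := k) (Fin.snoc a b) (s + 1)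
            (((dualIota (k := k) ε₁ (s + 1)).coprod (dualSigma ε₂ s)) (x, xb))) := by
  refine ⟨eps1, eps2, ?_, ?_, bij0, bijs, ?_, ?_⟩
  · intro J
    unfold eps1
    rcases Nat.even_or_odd J.card with h | h
    · exact Or.inl (Even.neg_one_pow h)
    · exact Or.inr (Odd.neg_one_pow h)
  · intro J
    exact Or.inl rfl
  · intro x
    rw [LinearMap.coprod_apply]
    exact commute_x a b 0 x
  · intro s x xb
    rw [LinearMap.coprod_apply, LinearMap.coprod_apply]
    dsimp only
    rw [map_add, map_add, ← commute_x a b (s + 1) x, ← commute_xb a b s xb]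
    exact (add_assoc _ _ _).symm
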